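/- Under Setup-4, for every positive integer λ, |L^λ| < (10C_𝓗)^{λ−10} n. -/

import Mathlib

open Matrix

namespace SubdivPaper

/-- A vertex set is independent in `G`. -/
def IsIndep {V : Type*} (G : SimpleGraph V) (s : Set V) : Prop :=
  s.Pairwise fun u v => ¬ G.Adj u v

/-- The independence number `α(G)` of a finite graph `G`. -/
noncomputable def indepNum {V : Type*} [Fintype V] (G : SimpleGraph V) : ℕ :=
  sSup {k : ℕ | ∃ s : Finset V, IsIndep G ↑s ∧ s.card = k}

/-- `γ_H := |V(H)| - α(H) - 1`. -/
noncomputable def gammaOf {V : Type*} [Fintype V] (G : SimpleGraph V) : ℕ :=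
  Fintype.card V - indepNum G - 1

/-- The set of internal vertices of a walk (support minus the two endpoints). -/
def WalkInternal {V : Type*} {G : SimpleGraph V} {a b : V} (p : G.Walk a b) : Set V :=
  {w | w ∈ p.support ∧ w ≠ a ∧ w ≠ b}

/-- `G` contains a subdivision of `H`: there are an injective map `φ` on vertices and,
for each edge `uv` of `H`, a path in `G` joining `φ u` and `φ v`, such that these paths are
pairwise internally vertex-disjoint and no internal vertex lies in the image of `φ`. -/
def ContainsSubdiv {V W : Type*} (G : SimpleGraph V) (H : SimpleGraph W) : Prop :=
  ∃ φ : W → V, Function.Injective φ ∧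
    ∃ P : ∀ ⦃u v : W⦄, H.Adj u v → G.Walk (φ u) (φ v),
      (∀ ⦃u v : W⦄ (h : H.Adj u v), (P h).IsPath) ∧
      (∀ ⦃u v : W⦄ (h : H.Adj u v), P h.symm = (P h).reverse) ∧
      (∀ ⦃u v : W⦄ (h : H.Adj u v), ∀ w ∈ WalkInternal (P h), w ∉ Set.range φ) ∧
      (∀ ⦃u v u' v' : W⦄ (h : H.Adj u v) (h' : H.Adj u' v'),
        s(u, v) ≠ s(u', v') → WalkInternal (P h) ∩ WalkInternal (P h') = ∅)

variable {ι : Type*}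

/-- `G` is `𝓗`-subdivision-free. -/
def SubdivFreeFam (m : ι → ℕ) (ℋ : ∀ i, SimpleGraph (Fin (m i)))
    {V : Type*} (G : SimpleGraph V) : Prop :=
  ∀ i, ¬ ContainsSubdiv G (ℋ i)

/-- `γ_𝓗 := min_{H ∈ 𝓗} γ_H`. -/
noncomputable def gammaFam (m : ι → ℕ) (ℋ : ∀ i, SimpleGraph (Fin (m i))) : ℕ :=
  sInf {g : ℕ | ∃ i, gammaOf (ℋ i) = g}

open Classical in
/-- The real adjacency matrix of a graph on `Fin n`. -/
noncomputable def adjMat {n : ℕ} (G : SimpleGraph (Fin n)) : Matrix (Fin n) (Fin n) ℝ :=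
  Matrix.of fun u v => if G.Adj u v then (1 : ℝ) else 0

/-- The spectral radius: the largest eigenvalue of the adjacency matrix. -/
noncomputable def specRad {n : ℕ} (G : SimpleGraph (Fin n)) : ℝ :=
  sSup {t : ℝ | ∃ x : Fin n → ℝ, x ≠ 0 ∧ adjMat G *ᵥ x = t • x}

/-- `spex(n, 𝓗_sub)`. -/
noncomputable def spex (n : ℕ) (m : ι → ℕ) (ℋ : ∀ i, SimpleGraph (Fin (m i))) : ℝ :=
  sSup {ρ : ℝ | ∃ G : SimpleGraph (Fin n), SubdivFreeFam m ℋ G ∧ specRad G = ρ}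

/-- `SPEX(n, 𝓗_sub)`: the `n`-vertex `𝓗`-subdivision-free graphs of maximum spectral radius. -/
def SPEX (n : ℕ) (m : ι → ℕ) (ℋ : ∀ i, SimpleGraph (Fin (m i))) :
    Set (SimpleGraph (Fin n)) :=
  {G | SubdivFreeFam m ℋ G ∧
    ∀ G' : SimpleGraph (Fin n), SubdivFreeFam m ℋ G' → specRad G' ≤ specRad G}

/-- The generalized book `B_{s,t} = K_s ∨ (t K_1)`. -/
def book (s t : ℕ) : SimpleGraph (Fin (s + t)) :=
  SimpleGraph.fromRel fun u v => (u : ℕ) < s ∨ (v : ℕ) < s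

/-- `G` contains a spanning subgraph isomorphic to `B`. -/
def HasSpanningSubgraphIso {V W : Type*} (G : SimpleGraph V) (B : SimpleGraph W) : Prop :=
  ∃ f : W ≃ V, ∀ u v : W, B.Adj u v → G.Adj (f u) (f v)

/-- The graph obtained from `G` by adding the edge `uv`. -/
def addEdge {V : Type*} (G : SimpleGraph V) (u v : V) : SimpleGraph V :=
  G ⊔ SimpleGraph.fromEdgeSet {s(u, v)}

/-- `G` is `𝓗`-subdivision-saturated. -/
def SubdivSatFam (m : ι → ℕ) (ℋ : ∀ i, SimpleGraph (Fin (m i)))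
    {V : Type*} (G : SimpleGraph V) : Prop :=
  SubdivFreeFam m ℋ G ∧
    ∀ u v : V, u ≠ v → ¬ G.Adj u v → ∃ i, ContainsSubdiv (addEdge G u v) (ℋ i)

/-- `max_{H ∈ 𝓗} |V(H)|`. -/
noncomputable def maxOrderFam (m : ι → ℕ) : ℕ := sSup (Set.range m)

/-- The minimum order of a graph `H ∈ 𝓗` with `γ_H = γ_𝓗` (the order of a minimal graph). -/
noncomputable def minOrderAtGamma (m : ι → ℕ) (ℋ : ∀ i, SimpleGraph (Fin (m i))) : ℕ :=
  sInf {k : ℕ | ∃ i, gammaOf (ℋ i) = gammaFam m ℋ ∧ m i = k}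

/-- `α_𝓗`: the independence number of a minimal graph with respect to `𝓗`. -/
noncomputable def alphaFam (m : ι → ℕ) (ℋ : ∀ i, SimpleGraph (Fin (m i))) : ℕ :=
  minOrderAtGamma m ℋ - gammaFam m ℋ - 1

/-- `S'' = {v ∉ L : L ⊆ N_G(v)}`. -/
def Sdd {n : ℕ} (G : SimpleGraph (Fin n)) (L : Finset (Fin n)) : Set (Fin n) :=
  {v | v ∉ L ∧ ∀ w ∈ L, G.Adj w v}

/-- `S' = (V ∖ L) ∖ S''`. -/
def Sd {n : ℕ} (G : SimpleGraph (Fin n)) (L : Finset (Fin n)) : Set (Fin n) :=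
  {v | v ∉ L ∧ ¬ ∀ w ∈ L, G.Adj w v}

/-- `L^λ = {u : x_u ≥ (10 C)^{-λ} x_{u*}}`. -/
def Lset {n : ℕ} (x : Fin n → ℝ) (u₀ : Fin n) (C : ℝ) (lam : ℕ) : Set (Fin n) :=
  {u | ((10 * C) ^ lam)⁻¹ * x u₀ ≤ x u}

/-- `N_i(u)`: vertices at distance exactly `i` from `u`. -/
def Nset {n : ℕ} (G : SimpleGraph (Fin n)) (u : Fin n) (i : ℕ) : Set (Fin n) :=
  {v | G.dist u v = i}

/-- `H[S] ∈ Γ_s(H)` is irreducible: `|S| = s` and no `s`-vertex induced subgraph of `H` is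
isomorphic to a proper subgraph of `H[S]`. -/
def IrreducibleInduced {h : ℕ} (H : SimpleGraph (Fin h)) (s : ℕ) (S : Finset (Fin h)) : Prop :=
  S.card = s ∧
    ¬ ∃ (T : Finset (Fin h)) (B' : SimpleGraph ((S : Set (Fin h)))),
        T.card = s ∧ B' ≤ SimpleGraph.induce (S : Set (Fin h)) H ∧
        B' ≠ SimpleGraph.induce (S : Set (Fin h)) H ∧
        Nonempty (SimpleGraph.induce (T : Set (Fin h)) H ≃g B')

/-- `Q` is `Γ(𝓗)`-subdivision-free. -/
def GammaFree (m : ι → ℕ) (ℋ : ∀ i, SimpleGraph (Fin (m i)))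
    {X : Type*} (Q : SimpleGraph X) : Prop :=
  ∀ (i : ι) (S : Finset (Fin (m i))),
    IrreducibleInduced (ℋ i) (m i - gammaFam m ℋ) S →
    ¬ ContainsSubdiv Q (SimpleGraph.induce (S : Set (Fin (m i))) (ℋ i))

/-- `Q` is `Γ(𝓗)`-subdivision-saturated. -/
def GammaSat (m : ι → ℕ) (ℋ : ∀ i, SimpleGraph (Fin (m i)))
    {X : Type*} (Q : SimpleGraph X) : Prop :=
  GammaFree m ℋ Q ∧
    ∀ u v : X, u ≠ v → ¬ Q.Adj u v →
      ∃ (i : ι) (S : Finset (Fin (m i))),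
        IrreducibleInduced (ℋ i) (m i - gammaFam m ℋ) S ∧
        ContainsSubdiv (addEdge Q u v) (SimpleGraph.induce (S : Set (Fin (m i))) (ℋ i))

/-- `G` is `{H}`-subdivision-saturated (single forbidden graph). -/
def SubdivSatSingle {W V : Type*} (H : SimpleGraph W) (G : SimpleGraph V) : Prop :=
  ¬ ContainsSubdiv G H ∧
    ∀ u v : V, u ≠ v → ¬ G.Adj u v → ContainsSubdiv (addEdge G u v) H

section Mader
set_option linter.unusedSectionVars false
set_option linter.unusedVariables false
set_option maxHeartbeats 1000000
variable {V : Type*} [Fintype V] [DecidableEq V] (G : SimpleGraph V) [DecidableRel G.Adj]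

/-- neighbors of `v` inside `S`. -/
def nd (v : V) (S : Finset V) : Finset V := S.filter (fun w => G.Adj v w)

/-- sum of internal degrees (= twice the number of internal edges). -/
def e2 (S : Finset V) : ℕ := ∑ v ∈ S, (nd G v S).card

lemma mem_nd {v w : V} {S : Finset V} : w ∈ nd G v S ↔ w ∈ S ∧ G.Adj v w := by
  simp [nd]

lemma nd_subset {v : V} {S : Finset V} : nd G v S ⊆ S := Finset.filter_subset _ _

lemma nd_irrefl {v : V} {S : Finset V} : v ∉ nd G v S := by
  simp [nd]

lemma nd_erase {v w : V} {S : Finset V} : nd G v (S.erase w) = (nd G v S).erase w := by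
  ext x
  simp only [mem_nd, Finset.mem_erase]
  tauto

lemma e2_erase {w : V} {S : Finset V} (hw : w ∈ S) :
    e2 G (S.erase w) + 2 * (nd G w S).card = e2 G S := by
  have hsplit : e2 G S = (nd G w S).card + ∑ v ∈ S.erase w, (nd G v S).card := by
    rw [e2, ← Finset.add_sum_erase _ _ hw]
  have hterm : ∀ v ∈ S.erase w,
      (nd G v S).card = (nd G v (S.erase w)).card + (if G.Adj v w then 1 else 0) := by
    intro v hv
    rw [nd_erase]
    by_cases hadj : G.Adj v w
    · have hwmem : w ∈ nd G v S := by simp [mem_nd, hw, hadj]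
      have h1 : 1 ≤ (nd G v S).card := Finset.card_pos.mpr ⟨w, hwmem⟩
      rw [Finset.card_erase_of_mem hwmem]
      simp [hadj]
      omega
    · have hnm : w ∉ nd G v S := by simp [mem_nd, hadj]
      rw [Finset.erase_eq_of_notMem hnm]
      simp [hadj]
  rw [Finset.sum_congr rfl hterm, Finset.sum_add_distrib] at hsplit
  have hcount : ∑ v ∈ S.erase w, (if G.Adj v w then 1 else 0)
      = ((S.erase w).filter (fun v => G.Adj v w)).card := by
    rw [Finset.card_filter]
  have hsame : ((S.erase w).filter (fun v => G.Adj v w)) = nd G w (S.erase w) := by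
    ext x
    simp only [Finset.mem_filter, mem_nd]
    constructor
    · rintro ⟨h1, h2⟩; exact ⟨h1, h2.symm⟩
    · rintro ⟨h1, h2⟩; exact ⟨h1, h2.symm⟩
  have hsame2 : nd G w (S.erase w) = nd G w S := by
    rw [nd_erase, Finset.erase_eq_of_notMem (nd_irrefl G)]
  rw [hcount, hsame, hsame2] at hsplit
  rw [e2]
  omega

/-- every graph with `e2 > 2D(|S|-1)` has a nonempty subset with min internal degree ≥ D. -/
lemma lemA (D : ℕ) :
    ∀ S : Finset V, S.Nonempty → 2*D*S.card < e2 G S + 2*D →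
    ∃ T, T ⊆ S ∧ T.Nonempty ∧ ∀ v ∈ T, D ≤ (nd G v T).card := by
  intro S
  induction S using Finset.strongInduction with
  | _ S ih =>
    intro hne hinv
    by_cases hall : ∀ v ∈ S, D ≤ (nd G v S).card
    · exact ⟨S, subset_rfl, hne, hall⟩
    · push_neg at hall
      obtain ⟨v, hvS, hvdeg⟩ := hall
      have herase := e2_erase G hvS
      have hpos : 1 ≤ S.card := Finset.card_pos.mpr hne
      have hcard : (S.erase v).card = S.card - 1 := Finset.card_erase_of_mem hvS
      have hne' : (S.erase v).Nonempty := by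
        rcases Finset.eq_empty_or_nonempty (S.erase v) with h | h
        · exfalso
          have hndsub : nd G v S ⊆ S.erase v := by
            intro x hx
            rcases (mem_nd G).mp hx with ⟨hxS, hadj⟩
            exact Finset.mem_erase.mpr ⟨fun he => G.irrefl (he ▸ hadj), hxS⟩
          have hnd0 : (nd G v S).card = 0 := by
            have := Finset.card_le_card hndsub
            rw [h] at this
            simpa using this
          have he20 : e2 G (S.erase v) = 0 := by rw [h]; rfl
          have hc1 : S.card = 1 := by
            have := hcard
            rw [h] at this
            simp at this
            omega
          rw [hc1] at hinv
          omega
        · exact h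
      have hinv' : 2*D*(S.erase v).card < e2 G (S.erase v) + 2*D := by
        have hc2 : S.card = (S.erase v).card + 1 := by omega
        rw [hc2] at hinv
        have key : 2*D*((S.erase v).card + 1) = 2*D*(S.erase v).card + 2*D := by ring
        have h2 : 2 * (nd G v S).card + 2 ≤ 2*D := by omega
        linarith [herase]
      obtain ⟨T, hT1, hT2, hT3⟩ := ih (S.erase v) (Finset.erase_ssubset hvS) hne' hinv'
      exact ⟨T, hT1.trans (Finset.erase_subset _ _), hT2, hT3⟩

/-- `U` is connected-within-itself. -/
def connIn (U : Finset V) : Prop :=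
  ∀ a ∈ U, ∀ b ∈ U, ∃ p : G.Walk a b, ∀ x ∈ p.support, x ∈ U

lemma walk_cross {U : Finset V} :
    ∀ {a b : V} (p : G.Walk a b), a ∈ U → b ∉ U →
      ∃ x ∈ U, ∃ y ∈ p.support, y ∉ U ∧ G.Adj x y := by
  intro a b p
  induction p with
  | nil => intro h1 h2; exact absurd h1 h2
  | cons h q ihq =>
    intro h1 h2
    rename_i u v w
    by_cases hv : v ∈ U
    · obtain ⟨x, hx, y, hy, hy2, hy3⟩ := ihq hv h2
      exact ⟨x, hx, y, by simp [SimpleGraph.Walk.support_cons]; right; exact hy, hy2, hy3⟩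
    · exact ⟨u, h1, v, by simp [SimpleGraph.Walk.support_cons, SimpleGraph.Walk.start_mem_support], hv, h⟩

/-- the external neighborhood of `U` inside `S`. -/
def wsetD (S U : Finset V) : Finset V := (S \ U).filter (fun w => ∃ u ∈ U, G.Adj u w)

lemma mem_wsetD {S U : Finset V} {w : V} :
    w ∈ wsetD G S U ↔ (w ∈ S ∧ w ∉ U) ∧ ∃ u ∈ U, G.Adj u w := by
  simp [wsetD, Finset.mem_sdiff, and_assoc]

/-- Key blob lemma: in a connected set of min internal degree ≥ 4d there is a connected
subset `U` whose external neighborhood has min internal degree ≥ d. -/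
lemma lemB (d : ℕ) (hd : 1 ≤ d) (S : Finset V) (hne : S.Nonempty) (hconn : connIn G S)
    (hdeg : ∀ v ∈ S, 4*d ≤ (nd G v S).card) :
    ∃ U, U ⊆ S ∧ U.Nonempty ∧ connIn G U ∧ (wsetD G S U).Nonempty ∧
      (∀ w ∈ wsetD G S U, d ≤ (nd G w (wsetD G S U)).card) := by
  classical
  obtain ⟨v₀, hv₀⟩ := hne
  set P : Finset V → Prop := fun U =>
    U.Nonempty ∧ connIn G U ∧
      4*d*(S.card + 1) ≤ e2 G (S \ U) + 2*(wsetD G S U).card + 4*d*U.card with hP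
  have hinit : P {v₀} := by
    refine ⟨⟨v₀, Finset.mem_singleton_self v₀⟩, ?_, ?_⟩
    · intro a ha b hb
      rw [Finset.mem_singleton] at ha hb
      subst ha; subst hb
      exact ⟨SimpleGraph.Walk.nil, by simp⟩
    · have h1 : S \ {v₀} = S.erase v₀ := by rw [Finset.erase_eq]
      have h2 : wsetD G S {v₀} = nd G v₀ (S.erase v₀) := by
        ext x
        simp [mem_wsetD, mem_nd, Finset.mem_erase]
        tauto
      have h3 : nd G v₀ (S.erase v₀) = nd G v₀ S := by
        rw [nd_erase, Finset.erase_eq_of_notMem (nd_irrefl G)]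
      have h4 := e2_erase G hv₀
      have h5 : 4*d*S.card ≤ e2 G S := by
        calc 4*d*S.card = ∑ _v ∈ S, 4*d := by rw [Finset.sum_const, smul_eq_mul, mul_comm]
        _ ≤ _ := Finset.sum_le_sum hdeg
      rw [h1, h2, h3, Finset.card_singleton]
      have : 4*d*(S.card+1) = 4*d*S.card + 4*d*1 := by ring
      omega
  have hfam : ({v₀} : Finset V) ∈ (S.powerset.filter P) := by
    rw [Finset.mem_filter, Finset.mem_powerset]
    exact ⟨Finset.singleton_subset_iff.mpr hv₀, hinit⟩
  obtain ⟨U, hUmem, hUmax⟩ := Finset.exists_max_image (S.powerset.filter P) Finset.card ⟨_, hfam⟩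
  rw [Finset.mem_filter, Finset.mem_powerset] at hUmem
  obtain ⟨hUS, hUne, hUconn, hUinv⟩ := hUmem
  have hWne : (wsetD G S U).Nonempty := by
    rcases Finset.eq_empty_or_nonempty (wsetD G S U) with hW | hW
    · exfalso
      by_cases hUeq : U = S
      · subst hUeq
        rw [Finset.sdiff_self, hW] at hUinv
        have : e2 G (∅ : Finset V) = 0 := rfl
        rw [this] at hUinv
        simp at hUinv
        have : 4*d*(U.card+1) = 4*d*U.card + 4*d := by ring
        omega
      · have hx : ∃ b ∈ S, b ∉ U := by
          by_contra hc
          push_neg at hc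
          exact hUeq (Finset.Subset.antisymm hUS hc)
        obtain ⟨b, hbS, hbU⟩ := hx
        obtain ⟨a, haU⟩ := hUne
        obtain ⟨p, hp⟩ := hconn a (hUS haU) b hbS
        obtain ⟨x, hxU, y, hy, hyU, hadj⟩ := walk_cross G p haU hbU
        have : y ∈ wsetD G S U := (mem_wsetD G).mpr ⟨⟨hp y hy, hyU⟩, x, hxU, hadj⟩
        rw [hW] at this
        simp at this
    · exact hW
  refine ⟨U, hUS, hUne, hUconn, hWne, ?_⟩
  intro w hw
  rcases (mem_wsetD G).mp hw with ⟨⟨hwS, hwU⟩, u₁, hu₁, hadj1⟩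
  -- consider U' = insert w U
  set U' := insert w U with hU'
  have hU'S : U' ⊆ S := Finset.insert_subset hwS hUS
  have hU'conn : connIn G U' := by
    intro a ha b hb
    have walkTo : ∀ c ∈ U', ∃ p : G.Walk c u₁, ∀ x ∈ p.support, x ∈ U' := by
      intro c hc
      rcases Finset.mem_insert.mp hc with hc1 | hc2
      · subst hc1
        refine ⟨SimpleGraph.Walk.cons hadj1.symm SimpleGraph.Walk.nil, ?_⟩
        intro x hx
        simp [SimpleGraph.Walk.support_cons] at hx
        rcases hx with h | h
        · subst h; exact Finset.mem_insert_self _ _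
        · subst h; exact Finset.mem_insert_of_mem hu₁
      · obtain ⟨p, hp⟩ := hUconn c hc2 u₁ hu₁
        exact ⟨p, fun x hx => Finset.mem_insert_of_mem (hp x hx)⟩
    obtain ⟨pa, hpa⟩ := walkTo a ha
    obtain ⟨pb, hpb⟩ := walkTo b hb
    refine ⟨pa.append pb.reverse, ?_⟩
    intro x hx
    rw [SimpleGraph.Walk.mem_support_append_iff] at hx
    rcases hx with h | h
    · exact hpa x h
    · rw [SimpleGraph.Walk.support_reverse, List.mem_reverse] at h
      exact hpb x h
  have hU'card : U'.card = U.card + 1 := Finset.card_insert_of_notMem hwU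
  have hU'fail : ¬ P U' := by
    intro hPU'
    have : U' ∈ S.powerset.filter P := by
      rw [Finset.mem_filter, Finset.mem_powerset]; exact ⟨hU'S, hPU'⟩
    have := hUmax U' this
    omega
  have hU'inv : ¬ (4*d*(S.card + 1) ≤ e2 G (S \ U') + 2*(wsetD G S U').card + 4*d*U'.card) := by
    intro hcon
    exact hU'fail ⟨⟨w, Finset.mem_insert_self _ _⟩, hU'conn, hcon⟩
  push_neg at hU'inv
  -- relations
  have hsd : S \ U' = (S \ U).erase w := by
    ext x
    simp [hU', Finset.mem_sdiff, Finset.mem_erase, Finset.mem_insert]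
    tauto
  have hwSU : w ∈ S \ U := Finset.mem_sdiff.mpr ⟨hwS, hwU⟩
  have he2 : e2 G ((S \ U).erase w) + 2 * (nd G w (S \ U)).card = e2 G (S \ U) :=
    e2_erase G hwSU
  -- pieces of wsetD U'
  set A1 := (wsetD G S U).erase w with hA1
  set X := nd G w (S \ U') with hX
  set A2 := X \ (wsetD G S U) with hA2
  have hXX : X = nd G w (S \ U) := by
    rw [hX, hsd, nd_erase, Finset.erase_eq_of_notMem (nd_irrefl G)]
  have hA1sub : A1 ⊆ wsetD G S U' := by
    intro x hx
    rcases Finset.mem_erase.mp hx with ⟨hxw, hx2⟩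
    rcases (mem_wsetD G).mp hx2 with ⟨⟨hxS, hxU⟩, u, hu, hadj⟩
    refine (mem_wsetD G).mpr ⟨⟨hxS, ?_⟩, u, Finset.mem_insert_of_mem hu, hadj⟩
    simp [hU', hxw, hxU]
  have hA2sub : A2 ⊆ wsetD G S U' := by
    intro x hx
    rcases Finset.mem_sdiff.mp hx with ⟨hx1, _⟩
    rcases (mem_nd G).mp hx1 with ⟨hx2, hadj⟩
    rcases Finset.mem_sdiff.mp hx2 with ⟨hxS, hxU'⟩
    exact (mem_wsetD G).mpr ⟨⟨hxS, hxU'⟩, w, Finset.mem_insert_self _ _, hadj⟩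
  have hdisj : Disjoint A1 A2 := by
    rw [Finset.disjoint_right]
    intro x hx hx1
    rcases Finset.mem_sdiff.mp hx with ⟨_, hx2⟩
    exact hx2 (Finset.mem_of_mem_erase hx1)
  have hcards : A1.card + A2.card ≤ (wsetD G S U').card := by
    rw [← Finset.card_union_of_disjoint hdisj]
    exact Finset.card_le_card (Finset.union_subset hA1sub hA2sub)
  have hA1card : A1.card + 1 = (wsetD G S U).card := by
    rw [hA1, Finset.card_erase_of_mem hw]
    have : 1 ≤ (wsetD G S U).card := Finset.card_pos.mpr ⟨w, hw⟩
    omega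
  have hinter : X ∩ (wsetD G S U) = nd G w (wsetD G S U) := by
    ext x
    simp only [Finset.mem_inter, hXX, mem_nd, mem_wsetD]
    constructor
    · rintro ⟨⟨_, hadj⟩, hmem⟩
      exact ⟨hmem, hadj⟩
    · rintro ⟨hmem, hadj⟩
      rcases hmem with ⟨⟨hxS, hxU⟩, _⟩
      exact ⟨⟨Finset.mem_sdiff.mpr ⟨hxS, hxU⟩, hadj⟩, ⟨⟨hxS, hxU⟩, ‹_›⟩⟩
  have hA2card : A2.card + (nd G w (wsetD G S U)).card = X.card := by
    rw [hA2, ← hinter, Finset.card_sdiff_add_card_inter]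
  have hXcard : (nd G w (S \ U)).card = X.card := by rw [hXX]
  have keyU : 4*d*U'.card = 4*d*U.card + 4*d := by rw [hU'card]; ring
  rw [hsd] at hU'inv
  linarith [he2, hcards, hA1card, hA2card, hUinv, hU'inv, keyU, hXcard, hd]

lemma exists_component (D : ℕ) (S : Finset V) (v₀ : V) (hv₀ : v₀ ∈ S)
    (hdeg : ∀ v ∈ S, D ≤ (nd G v S).card) :
    ∃ C, C ⊆ S ∧ v₀ ∈ C ∧ connIn G C ∧ ∀ v ∈ C, D ≤ (nd G v C).card := by
  classical
  set C := S.filter (fun b => ∃ p : G.Walk v₀ b, ∀ x ∈ p.support, x ∈ S) with hC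
  have hCsub : C ⊆ S := Finset.filter_subset _ _
  have hv₀C : v₀ ∈ C := by
    rw [hC, Finset.mem_filter]
    exact ⟨hv₀, SimpleGraph.Walk.nil, by simp [hv₀]⟩
  have hsupmem : ∀ b ∈ C, ∀ (p : G.Walk v₀ b), (∀ x ∈ p.support, x ∈ S) →
      ∀ x ∈ p.support, x ∈ C := by
    intro b _ p hp x hx
    rw [hC, Finset.mem_filter]
    exact ⟨hp x hx, p.takeUntil x hx, fun y hy =>
      hp y (SimpleGraph.Walk.support_takeUntil_subset p hx hy)⟩
  have hconn : connIn G C := by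
    intro a ha b hb
    obtain ⟨haS, pa, hpa⟩ := Finset.mem_filter.mp ha
    obtain ⟨hbS, pb, hpb⟩ := Finset.mem_filter.mp hb
    refine ⟨pa.reverse.append pb, ?_⟩
    intro x hx
    rw [SimpleGraph.Walk.mem_support_append_iff] at hx
    rcases hx with h | h
    · rw [SimpleGraph.Walk.support_reverse, List.mem_reverse] at h
      exact hsupmem a ha pa hpa x h
    · exact hsupmem b hb pb hpb x h
  refine ⟨C, hCsub, hv₀C, hconn, ?_⟩
  intro v hv
  have hndsub : nd G v S ⊆ nd G v C := by
    intro x hx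
    rcases (mem_nd G).mp hx with ⟨hxS, hadj⟩
    obtain ⟨hvS, pv, hpv⟩ := Finset.mem_filter.mp hv
    have hxC : x ∈ C := by
      rw [hC, Finset.mem_filter]
      refine ⟨hxS, pv.concat hadj, ?_⟩
      intro y hy
      rw [SimpleGraph.Walk.support_concat, List.mem_append] at hy
      rcases hy with h | h
      · exact hpv y h
      · simp at h; subst h; exact hxS
    exact (mem_nd G).mpr ⟨hxC, hadj⟩
  calc D ≤ (nd G v S).card := hdeg v (hCsub hv)
  _ ≤ _ := Finset.card_le_card hndsub
lemma cp_succ (b : ℕ) : Nat.choose (b+1) 2 = Nat.choose b 2 + b := by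
  rw [show (2:ℕ) = 1 + 1 from rfl, Nat.choose_succ_succ' b 1, Nat.choose_one_right]
  omega

lemma cp_mono {a b : ℕ} (h : a ≤ b) : Nat.choose a 2 ≤ Nat.choose b 2 :=
  Nat.choose_le_choose 2 h

lemma cp_lt {a b : ℕ} (ha : 1 ≤ a) (h : a < b) : Nat.choose a 2 < Nat.choose b 2 := by
  calc Nat.choose a 2 < Nat.choose a 2 + a := by omega
  _ = Nat.choose (a+1) 2 := (cp_succ a).symm
  _ ≤ Nat.choose b 2 := cp_mono h

lemma cp_zero_iff {v : ℕ} : Nat.choose v 2 = 0 ↔ v ≤ 1 := by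
  rw [Nat.choose_eq_zero_iff]; omega

lemma exists_pair {r j : ℕ} (hr : 1 ≤ r) (h1 : 1 ≤ j) (h2 : j < Nat.choose r 2) :
    ∃ a b : ℕ, a < b ∧ b < r ∧ Nat.choose b 2 + a = j := by
  classical
  set b := Nat.findGreatest (fun b => Nat.choose b 2 ≤ j) r with hbdef
  have hb1 : 1 ≤ b := Nat.le_findGreatest hr (by simp [cp_zero_iff.mpr])
  have hbspec : Nat.choose b 2 ≤ j :=
    Nat.findGreatest_spec (P := fun b => Nat.choose b 2 ≤ j) hr (by simp)
  have hble : b ≤ r := Nat.findGreatest_le r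
  have hbr : b < r := by
    rcases Nat.lt_or_ge b r with h | h
    · exact h
    · exfalso; have : b = r := le_antisymm hble h
      rw [this] at hbspec; omega
  have hmax : ¬ (Nat.choose (b+1) 2 ≤ j) :=
    Nat.findGreatest_is_greatest (P := fun x => Nat.choose x 2 ≤ j) (n := r) (by omega) (by omega)
  have hkey : j < Nat.choose b 2 + b := by
    rw [← cp_succ]; omega
  exact ⟨j - Nat.choose b 2, b, by omega, hbr, by omega⟩

lemma rank_inj {a b a' b' : ℕ} (h : a < b) (h' : a' < b')
    (he : Nat.choose b 2 + a = Nat.choose b' 2 + a') : a = a' ∧ b = b' := by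
  rcases lt_trichotomy b b' with hlt | heq | hgt
  · exfalso
    have h1 : Nat.choose b 2 + a < Nat.choose (b+1) 2 := by rw [cp_succ]; omega
    have h2 : Nat.choose (b+1) 2 ≤ Nat.choose b' 2 := cp_mono (by omega)
    omega
  · subst heq; omega
  · exfalso
    have h1 : Nat.choose b' 2 + a' < Nat.choose (b'+1) 2 := by rw [cp_succ]; omega
    have h2 : Nat.choose (b'+1) 2 ≤ Nat.choose b 2 := cp_mono (by omega)
    omega

/-- A partial subdivision of `K_r` (the first `j` edges in the canonical order),
with all vertices inside `S`. -/
structure PE (G : SimpleGraph V) (r j : ℕ) (S : Finset V) where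
  φ : Fin r → V
  mem : ∀ v : Fin r, Nat.choose (v:ℕ) 2 < j → φ v ∈ S
  inj : ∀ v w : Fin r, Nat.choose (v:ℕ) 2 < j → Nat.choose (w:ℕ) 2 < j → φ v = φ w → v = w
  P : ∀ a b : Fin r, (a:ℕ) < (b:ℕ) → Nat.choose (b:ℕ) 2 + (a:ℕ) < j → G.Walk (φ a) (φ b)
  path : ∀ (a b : Fin r) (h1 : (a:ℕ) < (b:ℕ)) (h2 : Nat.choose (b:ℕ) 2 + (a:ℕ) < j),
    (P a b h1 h2).IsPath
  sup : ∀ (a b : Fin r) (h1 : (a:ℕ) < (b:ℕ)) (h2 : Nat.choose (b:ℕ) 2 + (a:ℕ) < j),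
    ∀ x ∈ (P a b h1 h2).support, x ∈ S
  intAvoid : ∀ (a b : Fin r) (h1 : (a:ℕ) < (b:ℕ)) (h2 : Nat.choose (b:ℕ) 2 + (a:ℕ) < j),
    ∀ x ∈ (P a b h1 h2).support, x ≠ φ a → x ≠ φ b →
    ∀ v : Fin r, Nat.choose (v:ℕ) 2 < j → x ≠ φ v
  disj : ∀ (a b a' b' : Fin r) (h1 : (a:ℕ) < (b:ℕ)) (h2 : Nat.choose (b:ℕ) 2 + (a:ℕ) < j)
    (h1' : (a':ℕ) < (b':ℕ)) (h2' : Nat.choose (b':ℕ) 2 + (a':ℕ) < j),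
    ¬((a:ℕ) = (a':ℕ) ∧ (b:ℕ) = (b':ℕ)) →
    ∀ x ∈ (P a b h1 h2).support, x ≠ φ a → x ≠ φ b →
    ∀ y ∈ (P a' b' h1' h2').support, y ≠ φ a' → y ≠ φ b' → x ≠ y

lemma pe_base (r : ℕ) (hr : 2 ≤ r) (S : Finset V) (hne : S.Nonempty)
    (hdeg : ∀ v ∈ S, 1 ≤ (nd G v S).card) : Nonempty (PE G r 1 S) := by
  classical
  obtain ⟨v₀, hv₀⟩ := hne
  have : (nd G v₀ S).Nonempty := Finset.card_pos.mp (hdeg v₀ hv₀)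
  obtain ⟨w₀, hw₀⟩ := this
  rcases (mem_nd G).mp hw₀ with ⟨hw₀S, hadj⟩
  have hne0 : v₀ ≠ w₀ := G.ne_of_adj hadj
  set φ : Fin r → V := fun i => if (i:ℕ) = 1 then w₀ else v₀ with hφ
  have hact : ∀ v : Fin r, Nat.choose (v:ℕ) 2 < 1 ↔ (v:ℕ) ≤ 1 := by
    intro v; rw [Nat.lt_one_iff, cp_zero_iff]
  have hedge : ∀ a b : Fin r, (a:ℕ) < (b:ℕ) → Nat.choose (b:ℕ) 2 + (a:ℕ) < 1 →
      (a:ℕ) = 0 ∧ (b:ℕ) = 1 := by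
    intro a b h1 h2
    have hb : Nat.choose (b:ℕ) 2 = 0 := by omega
    rw [cp_zero_iff] at hb
    omega
  have hφa : ∀ a : Fin r, (a:ℕ) = 0 → φ a = v₀ := by
    intro a ha; rw [hφ]; simp [ha]
  have hφb : ∀ b : Fin r, (b:ℕ) = 1 → φ b = w₀ := by
    intro b hb; rw [hφ]; simp [hb]
  set W₀ : G.Walk v₀ w₀ := SimpleGraph.Walk.cons hadj SimpleGraph.Walk.nil with hW₀
  have hW₀sup : W₀.support = [v₀, w₀] := by
    rw [hW₀, SimpleGraph.Walk.support_cons, SimpleGraph.Walk.support_nil]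
  have hW₀path : W₀.IsPath := by
    rw [SimpleGraph.Walk.isPath_def, hW₀sup]
    simp [hne0]
  set Pd : ∀ a b : Fin r, (a:ℕ) < (b:ℕ) → Nat.choose (b:ℕ) 2 + (a:ℕ) < 1 → G.Walk (φ a) (φ b) :=
    fun a b h1 h2 => W₀.copy (hφa a (hedge a b h1 h2).1).symm (hφb b (hedge a b h1 h2).2).symm
    with hPd
  have hPsup : ∀ a b h1 h2, (Pd a b h1 h2).support = [v₀, w₀] := by
    intro a b h1 h2
    rw [hPd]
    rw [SimpleGraph.Walk.support_copy, hW₀sup]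
  have hmem : ∀ v : Fin r, Nat.choose (v:ℕ) 2 < 1 → φ v ∈ S := by
    intro v hv
    by_cases h : (v:ℕ) = 1
    · rw [hφb v h]; exact hw₀S
    · rw [hφ]; simp only [h, if_false]; exact hv₀
  have hinj : ∀ v w : Fin r, Nat.choose (v:ℕ) 2 < 1 → Nat.choose (w:ℕ) 2 < 1 → φ v = φ w → v = w := by
    intro v w hv hw hvw
    rw [hact] at hv hw
    rw [hφ] at hvw
    simp only at hvw
    by_cases h1 : (v:ℕ) = 1 <;> by_cases h2 : (w:ℕ) = 1
    · exact Fin.ext (by omega)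
    · rw [if_pos h1, if_neg h2] at hvw; exact absurd hvw.symm hne0
    · rw [if_neg h1, if_pos h2] at hvw; exact absurd hvw hne0
    · exact Fin.ext (by omega)
  refine ⟨⟨φ, hmem, hinj, Pd, ?_, ?_, ?_, ?_⟩⟩
  · intro a b h1 h2
    rw [hPd, SimpleGraph.Walk.isPath_copy]
    exact hW₀path
  · intro a b h1 h2 x hx
    rw [hPsup a b h1 h2] at hx
    simp at hx
    rcases hx with h | h
    · subst h; exact hv₀
    · subst h; exact hw₀S
  · intro a b h1 h2 x hx hxa hxb v hv
    rw [hPsup a b h1 h2] at hx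
    rw [hφa a (hedge a b h1 h2).1] at hxa
    rw [hφb b (hedge a b h1 h2).2] at hxb
    simp at hx
    rcases hx with h | h
    · exact absurd h hxa
    · exact absurd h hxb
  · intro a b a' b' h1 h2 h1' h2' hfalse x hx hxa hxb y hy hya hyb
    exfalso
    obtain ⟨ha, hb⟩ := hedge a b h1 h2
    obtain ⟨ha', hb'⟩ := hedge a' b' h1' h2'
    exact hfalse ⟨by omega, by omega⟩
lemma single_edge_isPath {x y : V} (h : G.Adj x y) :
    (SimpleGraph.Walk.cons h SimpleGraph.Walk.nil).IsPath := by
  rw [SimpleGraph.Walk.isPath_def, SimpleGraph.Walk.support_cons, SimpleGraph.Walk.support_nil]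
  simp [G.ne_of_adj h]

lemma pe_step (r : ℕ) (j : ℕ) (hj : 1 ≤ j) (hjr : j < Nat.choose r 2)
    (S : Finset V) (hneS : S.Nonempty) (hdegS : ∀ v ∈ S, 2*4^(j+1) ≤ (nd G v S).card)
    (IH : ∀ T : Finset V, T.Nonempty → (∀ v ∈ T, 2*4^j ≤ (nd G v T).card) →
      Nonempty (PE G r j T)) :
    Nonempty (PE G r (j+1) S) := by
  classical
  have hr2 : 2 ≤ r := by
    by_contra hlt
    have : Nat.choose r 2 = 0 := cp_zero_iff.mpr (by omega)
    omega
  set d := 2*4^j with hddef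
  have hd1 : 1 ≤ d := Nat.one_le_iff_ne_zero.mpr (by rw [hddef]; exact Nat.mul_ne_zero (by norm_num) (pow_ne_zero _ (by norm_num)))
  have hdeg4 : ∀ v ∈ S, 4*d ≤ (nd G v S).card := by
    intro v hv
    have : 4*d = 2*4^(j+1) := by rw [hddef, pow_succ]; ring
    rw [this]; exact hdegS v hv
  obtain ⟨v₀, hv₀⟩ := hneS
  obtain ⟨C, hCS, hv₀C, hCconn, hCdeg⟩ := exists_component G (4*d) S v₀ hv₀ hdeg4
  obtain ⟨U, hUC, hUne, hUconn, hWne, hWdeg⟩ :=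
    lemB G d hd1 C ⟨v₀, hv₀C⟩ hCconn hCdeg
  set W := wsetD G C U with hWdef
  have hWU : ∀ w ∈ W, w ∉ U := fun w hw => ((mem_wsetD G).mp hw).1.2
  have hWS : W ⊆ S := by
    intro w hw
    exact hCS ((mem_wsetD G).mp hw).1.1
  have hUS : U ⊆ S := hUC.trans hCS
  obtain ⟨pe⟩ := IH W hWne hWdeg
  obtain ⟨as, bs, habs, hbsr, hrank⟩ := exists_pair (r := r) (by omega) hj hjr
  set af : Fin r := ⟨as, by omega⟩ with hafdef
  set bf : Fin r := ⟨bs, hbsr⟩ with hbfdef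
  have hafne : af ≠ bf := by
    intro h
    have := congrArg Fin.val h
    simp [hafdef, hbfdef] at this
    omega
  have edge_lt : ∀ (a b : Fin r), (a:ℕ) < (b:ℕ) → Nat.choose (b:ℕ) 2 + (a:ℕ) < j+1 →
      ¬((a:ℕ) = as ∧ (b:ℕ) = bs) → Nat.choose (b:ℕ) 2 + (a:ℕ) < j := by
    intro a b h1 h2 hne
    rcases Nat.lt_or_ge (Nat.choose (b:ℕ) 2 + (a:ℕ)) j with h | h
    · exact h
    · exfalso
      have heq : Nat.choose (b:ℕ) 2 + (a:ℕ) = Nat.choose bs 2 + as := by omega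
      obtain ⟨hh1, hh2⟩ := rank_inj h1 habs heq
      exact hne ⟨hh1, hh2⟩
  rcases Nat.eq_zero_or_pos as with hA | hB
  -- ===================== CASE A : new branch vertex bs =====================
  · have hcpbs : Nat.choose bs 2 = j := by omega
    have hbs1 : 1 ≤ bs := by omega
    have act0 : Nat.choose (af:ℕ) 2 < j := by
      have h0 : (af:ℕ) = 0 := by simp [hafdef, hA]
      rw [h0]
      have : Nat.choose 0 2 = 0 := rfl
      omega
    set φ0 := pe.φ af with hφ0def
    have hφ0W : φ0 ∈ W := pe.mem af act0
    obtain ⟨⟨_, _⟩, u₁, hu₁U, hadj1⟩ := (mem_wsetD G).mp hφ0W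
    have hu₁W : u₁ ∉ W := fun h => (hWU u₁ h) hu₁U
    set φ' := Function.update pe.φ bf u₁ with hφ'def
    have hold_ne_b : ∀ v : Fin r, Nat.choose (v:ℕ) 2 < j → v ≠ bf := by
      intro v hv h
      rw [h] at hv
      simp [hbfdef] at hv
      omega
    have hφ'old : ∀ v : Fin r, Nat.choose (v:ℕ) 2 < j → φ' v = pe.φ v := by
      intro v hv
      rw [hφ'def]
      exact Function.update_of_ne (hold_ne_b v hv) _ _
    have hφ'b : φ' bf = u₁ := by rw [hφ'def]; exact Function.update_self _ _ _
    have act_char : ∀ v : Fin r, Nat.choose (v:ℕ) 2 < j + 1 ↔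
        (Nat.choose (v:ℕ) 2 < j ∨ v = bf) := by
      intro v
      constructor
      · intro hv
        rcases Nat.lt_or_ge (Nat.choose (v:ℕ) 2) j with h | h
        · exact Or.inl h
        · right
          have heq : Nat.choose (v:ℕ) 2 = Nat.choose bs 2 := by omega
          have hv2 : 2 ≤ (v:ℕ) := by
            by_contra hc
            have : Nat.choose (v:ℕ) 2 = 0 := cp_zero_iff.mpr (by omega)
            omega
          have hb2 : 2 ≤ bs := by
            by_contra hc
            have : Nat.choose bs 2 = 0 := cp_zero_iff.mpr (by omega)
            omega
          have : (v:ℕ) = bs := by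
            rcases lt_trichotomy (v:ℕ) bs with h' | h' | h'
            · exact absurd heq (Nat.ne_of_lt (cp_lt (by omega) h'))
            · exact h'
            · exact absurd heq.symm (Nat.ne_of_lt (cp_lt (by omega) h'))
          exact Fin.ext (by simp [hbfdef, this])
      · intro hv
        rcases hv with h | h
        · omega
        · rw [h]
          simp [hbfdef]
          omega
    have hAchar : ∀ (a b : Fin r), ((a:ℕ) = as ∧ (b:ℕ) = bs) → (a = af ∧ b = bf) := by
      intro a b ⟨h1, h2⟩
      exact ⟨Fin.ext (by simp [hafdef, h1]), Fin.ext (by simp [hbfdef, h2])⟩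
    have hφ'anew : ∀ a : Fin r, a = af → φ' a = φ0 := by
      intro a h
      subst h
      rw [hφ'old af act0, hφ0def]
    -- the new walk
    set nw : G.Walk φ0 u₁ := SimpleGraph.Walk.cons hadj1.symm SimpleGraph.Walk.nil with hnwdef
    have hnwsup : nw.support = [φ0, u₁] := by
      rw [hnwdef, SimpleGraph.Walk.support_cons, SimpleGraph.Walk.support_nil]
    set P' : ∀ a b : Fin r, (a:ℕ) < (b:ℕ) → Nat.choose (b:ℕ) 2 + (a:ℕ) < j+1 →
        G.Walk (φ' a) (φ' b) := fun a b h1 h2 =>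
      if hc : (a:ℕ) = as ∧ (b:ℕ) = bs then
        nw.copy (hφ'anew a (hAchar a b hc).1).symm
          (by rw [(hAchar a b hc).2, hφ'b])
      else
        (pe.P a b h1 (edge_lt a b h1 h2 hc)).copy
          (hφ'old a (by
            have h3 := edge_lt a b h1 h2 hc
            have h4 := cp_mono h1.le
            omega)).symm
          (hφ'old b (by
            have h3 := edge_lt a b h1 h2 hc
            omega)).symm
      with hP'def
    refine ⟨⟨φ', ?_, ?_, P', ?_, ?_, ?_, ?_⟩⟩
    · -- mem
      intro v hv
      rcases (act_char v).mp hv with h | h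
      · rw [hφ'old v h]; exact hWS (pe.mem v h)
      · rw [h, hφ'b]; exact hUS hu₁U
    · -- inj
      intro v w hv hw hvw
      rcases (act_char v).mp hv with h | h <;> rcases (act_char w).mp hw with h' | h'
      · rw [hφ'old v h, hφ'old w h'] at hvw
        exact pe.inj v w h h' hvw
      · exfalso
        rw [hφ'old v h, h', hφ'b] at hvw
        exact hu₁W (hvw ▸ pe.mem v h)
      · exfalso
        rw [hφ'old w h', h, hφ'b] at hvw
        exact hu₁W (hvw ▸ pe.mem w h')
      · rw [h, h']
    · -- path
      intro a b h1 h2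
      simp only [hP'def]
      by_cases hc : (a:ℕ) = as ∧ (b:ℕ) = bs
      · rw [dif_pos hc, SimpleGraph.Walk.isPath_copy]
        exact single_edge_isPath G hadj1.symm
      · rw [dif_neg hc, SimpleGraph.Walk.isPath_copy]
        exact pe.path _ _ _ _
    · -- sup
      intro a b h1 h2 x hx
      simp only [hP'def] at hx
      by_cases hc : (a:ℕ) = as ∧ (b:ℕ) = bs
      · rw [dif_pos hc, SimpleGraph.Walk.support_copy, hnwsup] at hx
        simp at hx
        rcases hx with h | h
        · rw [h]; exact hWS hφ0W
        · rw [h]; exact hUS hu₁U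
      · rw [dif_neg hc, SimpleGraph.Walk.support_copy] at hx
        exact hWS (pe.sup _ _ _ _ x hx)
    · -- intAvoid
      intro a b h1 h2 x hx hxa hxb v hv
      simp only [hP'def] at hx
      by_cases hc : (a:ℕ) = as ∧ (b:ℕ) = bs
      · exfalso
        rw [dif_pos hc, SimpleGraph.Walk.support_copy, hnwsup] at hx
        rw [hφ'anew a (hAchar a b hc).1] at hxa
        rw [(hAchar a b hc).2, hφ'b] at hxb
        simp at hx
        rcases hx with h | h
        · exact hxa h
        · exact hxb h
      · rw [dif_neg hc, SimpleGraph.Walk.support_copy] at hx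
        have hlt := edge_lt a b h1 h2 hc
        have ha_act : Nat.choose (a:ℕ) 2 < j := by have := cp_mono h1.le; omega
        have hb_act : Nat.choose (b:ℕ) 2 < j := by omega
        have hxW : x ∈ W := pe.sup _ _ _ _ x hx
        rcases (act_char v).mp hv with h | h
        · rw [hφ'old v h]
          rw [hφ'old a ha_act] at hxa
          rw [hφ'old b hb_act] at hxb
          exact pe.intAvoid a b h1 hlt x hx hxa hxb v h
        · rw [h, hφ'b]
          intro hxu
          exact hu₁W (hxu ▸ hxW)
    · -- disj
      intro a b a' b' h1 h2 h1' h2' hdiff x hx hxa hxb y hy hya hyb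
      simp only [hP'def] at hx hy
      by_cases hc : (a:ℕ) = as ∧ (b:ℕ) = bs <;>
        by_cases hc' : (a':ℕ) = as ∧ (b':ℕ) = bs
      · exact absurd ⟨by omega, by omega⟩ hdiff
      · exfalso
        rw [dif_pos hc, SimpleGraph.Walk.support_copy, hnwsup] at hx
        rw [hφ'anew a (hAchar a b hc).1] at hxa
        rw [(hAchar a b hc).2, hφ'b] at hxb
        simp at hx
        rcases hx with h | h
        · exact hxa h
        · exact hxb h
      · exfalso
        rw [dif_pos hc', SimpleGraph.Walk.support_copy, hnwsup] at hy
        rw [hφ'anew a' (hAchar a' b' hc').1] at hya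
        rw [(hAchar a' b' hc').2, hφ'b] at hyb
        simp at hy
        rcases hy with h | h
        · exact hya h
        · exact hyb h
      · rw [dif_neg hc, SimpleGraph.Walk.support_copy] at hx
        rw [dif_neg hc', SimpleGraph.Walk.support_copy] at hy
        have hlt := edge_lt a b h1 h2 hc
        have hlt' := edge_lt a' b' h1' h2' hc'
        rw [hφ'old a (by have := cp_mono h1.le; omega)] at hxa
        rw [hφ'old b (by omega)] at hxb
        rw [hφ'old a' (by have := cp_mono h1'.le; omega)] at hya
        rw [hφ'old b' (by omega)] at hyb
        exact pe.disj a b a' b' h1 hlt h1' hlt' hdiff x hx hxa hxb y hy hya hyb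
  -- ===================== CASE B : both endpoints old =====================
  · have bact : Nat.choose bs 2 < j := by omega
    have aact : Nat.choose as 2 < j := by
      have h1 : Nat.choose as 2 ≤ Nat.choose bs 2 := cp_mono (by omega)
      omega
    have actf : Nat.choose (af:ℕ) 2 < j := by simpa [hafdef] using aact
    have bctf : Nat.choose (bf:ℕ) 2 < j := by simpa [hbfdef] using bact
    set xv := pe.φ af with hxvdef
    set yv := pe.φ bf with hyvdef
    have hxW : xv ∈ W := pe.mem af actf
    have hyW : yv ∈ W := pe.mem bf bctf
    obtain ⟨⟨_, _⟩, u₁, hu₁U, hadj1⟩ := (mem_wsetD G).mp hxW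
    obtain ⟨⟨_, _⟩, u₂, hu₂U, hadj2⟩ := (mem_wsetD G).mp hyW
    obtain ⟨wU, hwUsup⟩ := hUconn u₁ hu₁U u₂ hu₂U
    set w0 : G.Walk xv yv := SimpleGraph.Walk.cons hadj1.symm (wU.concat hadj2) with hw0def
    set q := w0.bypass with hqdef
    have hqpath : q.IsPath := SimpleGraph.Walk.bypass_isPath w0
    have hqsup : ∀ z ∈ q.support, z = xv ∨ z ∈ U ∨ z = yv := by
      intro z hz
      have hz2 : z ∈ w0.support := SimpleGraph.Walk.support_bypass_subset w0 hz
      rw [hw0def, SimpleGraph.Walk.support_cons] at hz2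
      rcases List.mem_cons.mp hz2 with h | h
      · exact Or.inl h
      · rw [SimpleGraph.Walk.support_concat] at h
        rw [List.mem_append] at h
        rcases h with h' | h'
        · exact Or.inr (Or.inl (hwUsup z h'))
        · exact Or.inr (Or.inr (by simpa using h'))
    have act_char : ∀ v : Fin r, Nat.choose (v:ℕ) 2 < j + 1 ↔ Nat.choose (v:ℕ) 2 < j := by
      intro v
      constructor
      · intro hv
        rcases Nat.lt_or_ge (Nat.choose (v:ℕ) 2) j with h | h
        · exact h
        · exfalso
          have heq : Nat.choose (v:ℕ) 2 = Nat.choose bs 2 + as := by omega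
          rcases le_or_gt (v:ℕ) bs with h' | h'
          · have : Nat.choose (v:ℕ) 2 ≤ Nat.choose bs 2 := cp_mono h'
            omega
          · have : Nat.choose bs 2 + bs ≤ Nat.choose (v:ℕ) 2 := by
              rw [← cp_succ]; exact cp_mono h'
            omega
      · intro hv; omega
    have hBchar : ∀ (a b : Fin r), ((a:ℕ) = as ∧ (b:ℕ) = bs) → (a = af ∧ b = bf) := by
      intro a b ⟨hh1, hh2⟩
      exact ⟨Fin.ext (by simp [hafdef, hh1]), Fin.ext (by simp [hbfdef, hh2])⟩
    set P' : ∀ a b : Fin r, (a:ℕ) < (b:ℕ) → Nat.choose (b:ℕ) 2 + (a:ℕ) < j+1 →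
        G.Walk (pe.φ a) (pe.φ b) := fun a b h1 h2 =>
      if hc : (a:ℕ) = as ∧ (b:ℕ) = bs then
        q.copy (by rw [(hBchar a b hc).1, hxvdef]) (by rw [(hBchar a b hc).2, hyvdef])
      else
        pe.P a b h1 (edge_lt a b h1 h2 hc)
      with hP'def
    refine ⟨⟨pe.φ, ?_, ?_, P', ?_, ?_, ?_, ?_⟩⟩
    · intro v hv
      exact hWS (pe.mem v ((act_char v).mp hv))
    · intro v w hv hw hvw
      exact pe.inj v w ((act_char v).mp hv) ((act_char w).mp hw) hvw
    · intro a b h1 h2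
      simp only [hP'def]
      by_cases hc : (a:ℕ) = as ∧ (b:ℕ) = bs
      · rw [dif_pos hc, SimpleGraph.Walk.isPath_copy]
        exact hqpath
      · rw [dif_neg hc]
        exact pe.path _ _ _ _
    · intro a b h1 h2 x hx
      simp only [hP'def] at hx
      by_cases hc : (a:ℕ) = as ∧ (b:ℕ) = bs
      · rw [dif_pos hc, SimpleGraph.Walk.support_copy] at hx
        rcases hqsup x hx with h | h | h
        · rw [h]; exact hWS hxW
        · exact hUS h
        · rw [h]; exact hWS hyW
      · rw [dif_neg hc] at hx
        exact hWS (pe.sup _ _ _ _ x hx)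
    · intro a b h1 h2 x hx hxa hxb v hv
      simp only [hP'def] at hx
      rw [act_char v] at hv
      by_cases hc : (a:ℕ) = as ∧ (b:ℕ) = bs
      · rw [dif_pos hc, SimpleGraph.Walk.support_copy] at hx
        rw [(hBchar a b hc).1] at hxa
        rw [(hBchar a b hc).2] at hxb
        have hxU : x ∈ U := by
          rcases hqsup x hx with h | h | h
          · exact absurd h (by rw [← hxvdef] at hxa; exact hxa)
          · exact h
          · exact absurd h (by rw [← hyvdef] at hxb; exact hxb)
        intro hxv
        exact (hWU _ (hxv ▸ pe.mem v hv)) hxU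
      · rw [dif_neg hc] at hx
        exact pe.intAvoid a b h1 (edge_lt a b h1 h2 hc) x hx hxa hxb v hv
    · intro a b a' b' h1 h2 h1' h2' hdiff x hx hxa hxb y hy hya hyb
      simp only [hP'def] at hx hy
      by_cases hc : (a:ℕ) = as ∧ (b:ℕ) = bs <;>
        by_cases hc' : (a':ℕ) = as ∧ (b':ℕ) = bs
      · exact absurd ⟨by omega, by omega⟩ hdiff
      · -- x internal of new (⊆ U), y in old (⊆ W)
        rw [dif_pos hc, SimpleGraph.Walk.support_copy] at hx
        rw [dif_neg hc'] at hy
        rw [(hBchar a b hc).1] at hxa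
        rw [(hBchar a b hc).2] at hxb
        have hxU : x ∈ U := by
          rcases hqsup x hx with h | h | h
          · exact absurd h (by rw [← hxvdef] at hxa; exact hxa)
          · exact h
          · exact absurd h (by rw [← hyvdef] at hxb; exact hxb)
        have hyWm : y ∈ W := pe.sup _ _ _ _ y hy
        intro hxy
        exact (hWU y hyWm) (hxy ▸ hxU)
      · rw [dif_pos hc', SimpleGraph.Walk.support_copy] at hy
        rw [dif_neg hc] at hx
        rw [(hBchar a' b' hc').1] at hya
        rw [(hBchar a' b' hc').2] at hyb
        have hyU : y ∈ U := by
          rcases hqsup y hy with h | h | h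
          · exact absurd h (by rw [← hxvdef] at hya; exact hya)
          · exact h
          · exact absurd h (by rw [← hyvdef] at hyb; exact hyb)
        have hxWm : x ∈ W := pe.sup _ _ _ _ x hx
        intro hxy
        exact (hWU x hxWm) (hxy ▸ hyU)
      · rw [dif_neg hc] at hx
        rw [dif_neg hc'] at hy
        exact pe.disj a b a' b' h1 (edge_lt a b h1 h2 hc) h1' (edge_lt a' b' h1' h2' hc')
          hdiff x hx hxa hxb y hy hya hyb

lemma mader_main (r : ℕ) (hr : 2 ≤ r) :
    ∀ j, 1 ≤ j → j ≤ Nat.choose r 2 → ∀ S : Finset V, S.Nonempty →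
      (∀ v ∈ S, 2*4^j ≤ (nd G v S).card) → Nonempty (PE G r j S) := by
  intro j hj
  induction j, hj using Nat.le_induction with
  | base =>
    intro hjr S hne hdeg
    exact pe_base G r hr S hne (fun v hv => le_trans (by norm_num) (hdeg v hv))
  | succ j hj ih =>
    intro hjr S hne hdeg
    exact pe_step G r j hj (by omega) S hne hdeg
      (fun T hTne hTdeg => ih (by omega) T hTne hTdeg)

lemma pe_to_top (r : ℕ) (hr : 3 ≤ r) (S : Finset V) (pe : PE G r (Nat.choose r 2) S) :
    ContainsSubdiv G (⊤ : SimpleGraph (Fin r)) := by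
  classical
  have hcp2 : 1 ≤ Nat.choose r 2 := by
    have : Nat.choose 2 2 ≤ Nat.choose r 2 := cp_mono (by omega)
    simpa using this
  have hallact : ∀ v : Fin r, Nat.choose (v:ℕ) 2 < Nat.choose r 2 := by
    intro v
    have h1 : (v:ℕ) ≤ r - 1 := by omega
    have h2 : Nat.choose (v:ℕ) 2 ≤ Nat.choose (r-1) 2 := cp_mono h1
    have h3 : Nat.choose (r-1) 2 < Nat.choose r 2 := by
      have := cp_lt (a := r-1) (b := r) (by omega) (by omega)
      exact this
    omega
  have halledge : ∀ a b : Fin r, (a:ℕ) < (b:ℕ) →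
      Nat.choose (b:ℕ) 2 + (a:ℕ) < Nat.choose r 2 := by
    intro a b h
    have hb : (b:ℕ) ≤ r - 1 := by omega
    have h2 : Nat.choose (b:ℕ) 2 ≤ Nat.choose (r-1) 2 := cp_mono hb
    have h3 : Nat.choose ((r-1)+1) 2 = Nat.choose (r-1) 2 + (r-1) := cp_succ _
    have h4 : (r-1)+1 = r := by omega
    rw [h4] at h3
    have ha : (a:ℕ) ≤ (b:ℕ) - 1 := by omega
    have hb2 : (b:ℕ) < r := b.isLt
    omega
  have hinj : Function.Injective pe.φ :=
    fun v w h => pe.inj v w (hallact v) (hallact w) h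
  have hvne : ∀ {u v : Fin r}, (⊤ : SimpleGraph (Fin r)).Adj u v → (u:ℕ) ≠ (v:ℕ) := by
    intro u v h hh
    exact ((SimpleGraph.top_adj _ _).mp h) (Fin.ext hh)
  set Pfun : ∀ ⦃u v : Fin r⦄, (⊤ : SimpleGraph (Fin r)).Adj u v → G.Walk (pe.φ u) (pe.φ v) :=
    fun u v h =>
      if c : (u:ℕ) < (v:ℕ) then pe.P u v c (halledge u v c)
      else (pe.P v u (by have := hvne h; omega) (halledge v u (by have := hvne h; omega))).reverse
    with hPfun
  refine ⟨pe.φ, hinj, Pfun, ?_, ?_, ?_, ?_⟩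
  · intro u v h
    simp only [hPfun]
    by_cases c : (u:ℕ) < (v:ℕ)
    · rw [dif_pos c]; exact pe.path _ _ _ _
    · rw [dif_neg c]
      rw [SimpleGraph.Walk.isPath_reverse_iff]
      exact pe.path _ _ _ _
  · intro u v h
    simp only [hPfun]
    by_cases c : (u:ℕ) < (v:ℕ)
    · rw [dif_neg (by omega), dif_pos c]
    · have c' : (v:ℕ) < (u:ℕ) := by have := hvne h; omega
      rw [dif_pos c', dif_neg c, SimpleGraph.Walk.reverse_reverse]
  · intro u v h w hw hrange
    obtain ⟨z, hz⟩ := hrange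
    obtain ⟨hw1, hw2, hw3⟩ := hw
    simp only [hPfun] at hw1
    by_cases c : (u:ℕ) < (v:ℕ)
    · rw [dif_pos c] at hw1
      exact pe.intAvoid u v c (halledge u v c) w hw1 hw2 hw3 z (hallact z) hz.symm
    · rw [dif_neg c, SimpleGraph.Walk.support_reverse, List.mem_reverse] at hw1
      exact pe.intAvoid v u (by have := hvne h; omega) _ w hw1 hw3 hw2 z (hallact z) hz.symm
  · intro u v u' v' h h' hsne
    rw [Set.eq_empty_iff_forall_notMem]
    rintro w ⟨⟨hw1, hw2, hw3⟩, ⟨hw4, hw5, hw6⟩⟩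
    simp only [hPfun] at hw1 hw4
    have hpairs : ∀ (a b a' b' : Fin r), s(a, b) = s(u,v) → s(a', b') = s(u',v') →
        ¬((a:ℕ) = (a':ℕ) ∧ (b:ℕ) = (b':ℕ)) ∨ False := by
      intro a b a' b' hs hs'
      left
      rintro ⟨h1, h2⟩
      apply hsne
      rw [← hs, ← hs', Fin.ext h1, Fin.ext h2]
    by_cases c : (u:ℕ) < (v:ℕ) <;> by_cases c' : (u':ℕ) < (v':ℕ)
    · rw [dif_pos c] at hw1
      rw [dif_pos c'] at hw4
      have hne2 : ¬((u:ℕ) = (u':ℕ) ∧ (v:ℕ) = (v':ℕ)) := by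
        rintro ⟨h1, h2⟩
        exact hsne (by rw [Fin.ext h1, Fin.ext h2])
      exact pe.disj u v u' v' c _ c' _ hne2 w hw1 hw2 hw3 w hw4 hw5 hw6 rfl
    · rw [dif_pos c] at hw1
      rw [dif_neg c', SimpleGraph.Walk.support_reverse, List.mem_reverse] at hw4
      have hne2 : ¬((u:ℕ) = (v':ℕ) ∧ (v:ℕ) = (u':ℕ)) := by
        rintro ⟨h1, h2⟩
        apply hsne
        rw [Fin.ext h1, Fin.ext h2]
        exact Sym2.eq_swap
      exact pe.disj u v v' u' c _ (by have := hvne h'; omega) _ hne2 w hw1 hw2 hw3 w hw4 hw6 hw5 rfl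
    · rw [dif_neg c, SimpleGraph.Walk.support_reverse, List.mem_reverse] at hw1
      rw [dif_pos c'] at hw4
      have hne2 : ¬((v:ℕ) = (u':ℕ) ∧ (u:ℕ) = (v':ℕ)) := by
        rintro ⟨h1, h2⟩
        apply hsne
        rw [← Fin.ext h1, ← Fin.ext h2]
        exact (Sym2.eq_swap).symm ▸ rfl
      exact pe.disj v u u' v' (by have := hvne h; omega) _ c' _ hne2 w hw1 hw3 hw2 w hw4 hw5 hw6 rfl
    · rw [dif_neg c, SimpleGraph.Walk.support_reverse, List.mem_reverse] at hw1
      rw [dif_neg c', SimpleGraph.Walk.support_reverse, List.mem_reverse] at hw4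
      have hne2 : ¬((v:ℕ) = (v':ℕ) ∧ (u:ℕ) = (u':ℕ)) := by
        rintro ⟨h1, h2⟩
        exact hsne (by rw [Fin.ext h1, Fin.ext h2])
      exact pe.disj v u v' u' (by have := hvne h; omega) _ (by have := hvne h'; omega) _ hne2 w hw1 hw3 hw2 w hw4 hw6 hw5 rfl

lemma contains_of_top {r : ℕ} (H : SimpleGraph (Fin r))
    (h : ContainsSubdiv G (⊤ : SimpleGraph (Fin r))) : ContainsSubdiv G H := by
  obtain ⟨φ, hinj, P, hpath, hsymm, hint, hdisj⟩ := h
  have e : ∀ {u v : Fin r}, H.Adj u v → (⊤ : SimpleGraph (Fin r)).Adj u v :=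
    fun h => (SimpleGraph.top_adj _ _).mpr h.ne
  refine ⟨φ, hinj, fun u v h => P (e h), ?_, ?_, ?_, ?_⟩
  · intro u v h; exact hpath (e h)
  · intro u v h; exact hsymm (e h)
  · intro u v h; exact hint (e h)
  · intro u v u' v' h h' hs; exact hdisj (e h) (e h') hs

end Mader

theorem statement11 {ι : Type*} [Fintype ι] [Nonempty ι]
    (m : ι → ℕ) (ℋ : ∀ i, SimpleGraph (Fin (m i)))
    (hγ : 1 ≤ gammaFam m ℋ) (C : ℝ)
    (hC : ∀ i, 2 * (m i : ℝ) ^ 3 < C ∧ 100 * ((ℋ i).edgeSet.ncard : ℝ) < C) :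
    ∃ N : ℕ, ∀ n : ℕ, N ≤ n →
      ∀ G : SimpleGraph (Fin n), SubdivFreeFam m ℋ G →
      Real.sqrt ((gammaFam m ℋ * (n - gammaFam m ℋ) : ℕ) : ℝ) ≤ specRad G →
      ∀ x : Fin n → ℝ, (∀ v, 0 ≤ x v) → (∑ v, x v ^ 2) = 1 →
        adjMat G *ᵥ x = specRad G • x →
      ∀ u₀ : Fin n, (∀ v, x v ≤ x u₀) →
      ∀ lam : ℕ, 1 ≤ lam →
        ((Lset x u₀ C lam).ncard : ℝ) < (10 * C) ^ ((lam : ℤ) - 10) * (n : ℝ) := by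
  classical
  have i₀ : ι := Classical.arbitrary ι
  set r := m i₀ with hrdef
  -- `r ≥ 3`
  have hγi : 1 ≤ gammaOf (ℋ i₀) := le_trans hγ (Nat.sInf_le ⟨i₀, rfl⟩)
  have hγr : gammaFam m ℋ ≤ r := by
    refine le_trans (Nat.sInf_le ⟨i₀, rfl⟩) ?_
    unfold gammaOf
    rw [Fintype.card_fin]
    omega
  have hr3 : 3 ≤ r := by
    unfold gammaOf at hγi
    rw [Fintype.card_fin] at hγi
    have hr1 : 1 ≤ r := by omega
    have hind1 : 1 ≤ indepNum (ℋ i₀) := by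
      have hmem : (1:ℕ) ∈ {k : ℕ | ∃ s : Finset (Fin r), IsIndep (ℋ i₀) ↑s ∧ s.card = k} := by
        refine ⟨{⟨0, by omega⟩}, ?_, Finset.card_singleton _⟩
        rw [IsIndep, Finset.coe_singleton]
        exact Set.pairwise_singleton _ _
      have hbdd : BddAbove {k : ℕ | ∃ s : Finset (Fin r), IsIndep (ℋ i₀) ↑s ∧ s.card = k} := by
        refine ⟨r, ?_⟩
        rintro k ⟨s, -, rfl⟩
        exact le_trans (Finset.card_le_univ s) (by simp)
      exact le_csSup hbdd hmem
    omega
  set MM := Nat.choose r 2 with hMM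
  set D := 2*4^MM with hD
  have hM1 : 1 ≤ MM := by
    have h1 : Nat.choose 3 2 ≤ Nat.choose r 2 := cp_mono hr3
    have h2 : Nat.choose 3 2 = 3 := by decide
    omega
  have hC0 : (0:ℝ) < C := lt_of_le_of_lt (by positivity) (hC i₀).1
  have h10C : (0:ℝ) < 10*C := by linarith
  have h10Cne : ((10:ℝ)*C) ≠ 0 := ne_of_gt h10C
  set K0 : ℝ := (2*(D:ℝ)+2) * (10*C)^10 with hK0
  have hK0pos : 0 ≤ K0 := by rw [hK0]; positivity
  refine ⟨r + (⌈K0^2⌉₊ + 1) + 1, ?_⟩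
  intro n hn G hfree hspec x hx0 hxsum heig u₀ hu₀ lam hlam
  haveI : DecidableRel G.Adj := Classical.decRel _
  by_contra hcon
  push_neg at hcon
  -- positivity of the top entry
  have hxu₀ : 0 < x u₀ := by
    rcases lt_or_ge 0 (x u₀) with h | h
    · exact h
    · exfalso
      have hzero : ∀ v, x v = 0 := fun v => le_antisymm (le_trans (hu₀ v) h) (hx0 v)
      have hs0 : (∑ v, x v ^ 2) = 0 := Finset.sum_eq_zero (fun v _ => by rw [hzero v]; ring)
      rw [hxsum] at hs0
      norm_num at hs0
  have hρ0 : 0 ≤ specRad G := le_trans (Real.sqrt_nonneg _) hspec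
  -- the level set as a Finset
  set Lf : Finset (Fin n) := Finset.univ.filter (fun u => ((10*C)^lam)⁻¹ * x u₀ ≤ x u) with hLf
  have hLset_eq : Lset x u₀ C lam = ↑Lf := by
    ext u
    simp [Lset, hLf]
  rw [hLset_eq, Set.ncard_coe_finset] at hcon
  -- the eigen-equation row
  have hrow : ∀ u : Fin n, specRad G * x u = ∑ v ∈ nd G u Finset.univ, x v := by
    intro u
    have h1 := congrFun heig u
    have h2 : (adjMat G *ᵥ x) u = ∑ v, (if G.Adj u v then x v else 0) := by
      rw [Matrix.mulVec, dotProduct]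
      refine Finset.sum_congr rfl (fun v _ => ?_)
      by_cases hadj : G.Adj u v <;> simp [adjMat, hadj]
    rw [h2, Pi.smul_apply, smul_eq_mul] at h1
    rw [← h1, nd, Finset.sum_filter]
  -- degree lower bound on the level set
  have hdeg2 : ∀ u ∈ Lf, specRad G * ((10*C)^lam)⁻¹ ≤ ((nd G u Finset.univ).card : ℝ) := by
    intro u hu
    have hu' : ((10*C)^lam)⁻¹ * x u₀ ≤ x u := (Finset.mem_filter.mp hu).2
    have h2 : specRad G * (((10*C)^lam)⁻¹ * x u₀) ≤ specRad G * x u :=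
      mul_le_mul_of_nonneg_left hu' hρ0
    rw [hrow u] at h2
    have h3 : ∑ v ∈ nd G u Finset.univ, x v ≤ ((nd G u Finset.univ).card : ℝ) * x u₀ := by
      calc ∑ v ∈ nd G u Finset.univ, x v ≤ ∑ _v ∈ nd G u Finset.univ, x u₀ :=
            Finset.sum_le_sum (fun v _ => hu₀ v)
      _ = ((nd G u Finset.univ).card : ℝ) * x u₀ := by
            rw [Finset.sum_const, nsmul_eq_mul]
    have h4 : specRad G * (((10*C)^lam)⁻¹ * x u₀) ≤ ((nd G u Finset.univ).card : ℝ) * x u₀ :=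
      le_trans h2 h3
    have h5 : (specRad G * ((10*C)^lam)⁻¹) * x u₀ ≤ ((nd G u Finset.univ).card : ℝ) * x u₀ := by
      calc (specRad G * ((10*C)^lam)⁻¹) * x u₀ = specRad G * (((10*C)^lam)⁻¹ * x u₀) := by ring
      _ ≤ _ := h4
    exact le_of_mul_le_mul_right h5 hxu₀
  -- sum of degrees
  have hsumdeg : (Lf.card : ℝ) * (specRad G * ((10*C)^lam)⁻¹) ≤ (e2 G Finset.univ : ℝ) := by
    have h1 : (Lf.card : ℝ) * (specRad G * ((10*C)^lam)⁻¹)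
        = ∑ _u ∈ Lf, (specRad G * ((10*C)^lam)⁻¹) := by
      rw [Finset.sum_const, nsmul_eq_mul]
    rw [h1]
    calc ∑ _u ∈ Lf, (specRad G * ((10*C)^lam)⁻¹)
        ≤ ∑ u ∈ Lf, ((nd G u Finset.univ).card : ℝ) := Finset.sum_le_sum hdeg2
    _ ≤ ∑ u ∈ Finset.univ, ((nd G u Finset.univ).card : ℝ) := by
        refine Finset.sum_le_sum_of_subset_of_nonneg (Finset.subset_univ _) ?_
        intro u _ _
        positivity
    _ = (e2 G Finset.univ : ℝ) := by
        rw [e2, Nat.cast_sum]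
  -- zpow juggling
  have hz1 : (((10:ℝ)*C)^lam)⁻¹ = ((10:ℝ)*C)^(-(lam:ℤ)) := by
    rw [_root_.zpow_neg, zpow_natCast]
  have hzz : ((10:ℝ)*C)^((lam:ℤ)-10) * (((10:ℝ)*C)^lam)⁻¹ = (((10:ℝ)*C)^(10:ℕ))⁻¹ := by
    rw [hz1, ← zpow_add₀ h10Cne]
    have h2 : ((lam:ℤ)-10) + (-(lam:ℤ)) = -(10:ℤ) := by ring
    rw [h2]
    simp
  -- chain to the edge bound
  have hchain : (((10:ℝ)*C)^(10:ℕ))⁻¹ * (n:ℝ) * specRad G ≤ (e2 G Finset.univ : ℝ) := by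
    have h0 : 0 ≤ specRad G * ((10*C)^lam)⁻¹ := by positivity
    have h1 : ((10*C) ^ ((lam:ℤ) - 10) * (n:ℝ)) * (specRad G * ((10*C)^lam)⁻¹)
        ≤ (Lf.card : ℝ) * (specRad G * ((10*C)^lam)⁻¹) :=
      mul_le_mul_of_nonneg_right hcon h0
    have h2 : ((10*C) ^ ((lam:ℤ) - 10) * (n:ℝ)) * (specRad G * ((10*C)^lam)⁻¹)
        = ((10*C) ^ ((lam:ℤ) - 10) * ((10*C)^lam)⁻¹) * (n:ℝ) * specRad G := by ring
    rw [h2, hzz] at h1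
    exact le_trans h1 hsumdeg
  -- the spectral radius is large
  have hprodN : (n - r : ℕ) ≤ gammaFam m ℋ * (n - gammaFam m ℋ) := by
    have h1 : n - r ≤ n - gammaFam m ℋ := Nat.sub_le_sub_left hγr n
    calc n - r ≤ n - gammaFam m ℋ := h1
    _ = 1 * (n - gammaFam m ℋ) := (one_mul _).symm
    _ ≤ gammaFam m ℋ * (n - gammaFam m ℋ) := Nat.mul_le_mul_right _ hγ
  have hsqrt1 : Real.sqrt ((n - r : ℕ)) ≤ specRad G := by
    refine le_trans (Real.sqrt_le_sqrt ?_) hspec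
    exact_mod_cast hprodN
  have hK2 : K0^2 ≤ ((n - r : ℕ) : ℝ) := by
    have h1 : (⌈K0^2⌉₊ + 1 : ℕ) ≤ n - r := by omega
    calc K0^2 ≤ (⌈K0^2⌉₊ : ℝ) := Nat.le_ceil _
    _ ≤ ((n - r : ℕ) : ℝ) := by exact_mod_cast le_trans (Nat.le_succ _) h1
  have hρK : K0 ≤ specRad G :=
    le_trans ((Real.le_sqrt hK0pos (by positivity)).mpr hK2) hsqrt1
  have hfin : (2*D+2)*n ≤ e2 G Finset.univ := by
    have h1 : (((10:ℝ)*C)^(10:ℕ))⁻¹ * (n:ℝ) * K0 ≤ (((10:ℝ)*C)^(10:ℕ))⁻¹ * (n:ℝ) * specRad G :=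
      mul_le_mul_of_nonneg_left hρK (by positivity)
    have h2 : (((10:ℝ)*C)^(10:ℕ))⁻¹ * (n:ℝ) * K0 = ((2*(D:ℝ)+2)) * (n:ℝ) := by
      rw [hK0]
      field_simp
    rw [h2] at h1
    have h3 : ((2*(D:ℝ)+2)) * (n:ℝ) ≤ (e2 G Finset.univ : ℝ) := le_trans h1 hchain
    exact_mod_cast h3
  -- extract a min-degree subgraph and a K_r-subdivision
  have hn1 : 1 ≤ n := by omega
  obtain ⟨T, _, hTne, hTdeg⟩ := lemA G D Finset.univ
    ⟨⟨0, by omega⟩, Finset.mem_univ _⟩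
    (by
      rw [Finset.card_univ, Fintype.card_fin]
      have heq : (2*D+2)*n = 2*D*n + 2*n := by ring
      rw [heq] at hfin
      have h2n : 2 ≤ 2*n := by omega
      linarith)
  obtain ⟨pe⟩ := mader_main G r (by omega) MM hM1 (le_refl MM) T hTne hTdeg
  exact hfree i₀ (contains_of_top G (ℋ i₀) (pe_to_top G r hr3 T pe))

end SubdivPaper
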